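/- Let n ≥ 2 be even, let λ_1,…,λ_n, μ_1,…,μ_n ∈ ℝ, and let v_1,…,v_n, w_1,…,w_n ∈ ℝ^n be arbitrary vectors (not necessarily orthonormal). Let T = Σ_{i=1}^n λ_i v_i^{⊗3} and S = Σ_{j=1}^n μ_j w_j^{⊗3}, and let P be their contraction along the third modes, P_{abcd} = Σ_{s=1}^n T_{abs} S_{cds}. Then h_n(P) = 0. In other words, for even n the polynomial h_n vanishes on every tensor train of length 2 whose two node tensors are symmetric order-3 tensors in S³(ℝ^n) of symmetric rank at most n, regardless of orthogonal decomposability. -/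

import Mathlib

open Finset

private def Gaux {N : ℕ} (lam mu : Fin N → ℝ) (v w : Fin N → Fin N → ℝ)
    (p : Fin N × Fin N × Fin N) (a b c d : Fin N) : ℝ :=
  (lam p.2.1 * (v p.2.1 a * v p.2.1 b * v p.2.1 p.1)) *
    (mu p.2.2 * (w p.2.2 c * w p.2.2 d * w p.2.2 p.1))

private lemma sumzero (m : ℕ) (heven : Even (m + 2))
    (lam mu : Fin (m+2) → ℝ) (v w : Fin (m+2) → Fin (m+2) → ℝ) :
    ∑ x : (Fin (m+2) → Fin (m+2)) × Equiv.Perm (Fin (m+2)) × Equiv.Perm (Fin (m+2)) ×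
        (Fin (m+2) → Fin (m+2) × Fin (m+2) × Fin (m+2)),
      ((Equiv.Perm.sign x.2.1 : ℤ) : ℝ) * ((Equiv.Perm.sign x.2.2.1 : ℤ) : ℝ) *
        ∏ t, Gaux lam mu v w (x.2.2.2 t) (x.1 t) (x.2.1 t) (x.1 (t-1)) (x.2.2.1 t) = 0 := by
  classical
  set r : Equiv.Perm (Fin (m+2)) := Equiv.neg _ with hr_def
  set τ : Equiv.Perm (Fin (m+2)) := Equiv.addRight 1 with hτ_def
  set r' : Equiv.Perm (Fin (m+2)) := τ * r with hr'_def
  have hrapp : ∀ x : Fin (m+2), r x = -x := fun x => rfl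
  have hr'app : ∀ x : Fin (m+2), r' x = 1 - x := by
    intro x
    simp [hr'_def, hτ_def, hr_def, Equiv.Perm.mul_apply, sub_eq_neg_add]
  have hτsign : Equiv.Perm.sign τ = -1 := by
    have h1 : τ = finRotate (m+2) := by
      ext x
      simp [hτ_def, finRotate_succ_apply]
    rw [h1, sign_finRotate]
    have hodd : Odd (m+1) := by
      rcases heven with ⟨j, hj⟩
      exact ⟨j - 1, by omega⟩
    exact Odd.neg_one_pow hodd
  have hsignrr' : ((Equiv.Perm.sign r : ℤ)) * ((Equiv.Perm.sign r' : ℤ)) = -1 := by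
    have h : Equiv.Perm.sign r * Equiv.Perm.sign r' = -1 := by
      rw [hr'_def, map_mul, hτsign, mul_left_comm, Int.units_mul_self, mul_one]
    simpa using congrArg (fun u : ℤˣ => (u : ℤ)) h
  have hr2 : r * r = 1 := by
    ext x
    simp [hr_def, Equiv.Perm.mul_apply]
  have hr'2 : r' * r' = 1 := by
    ext x
    simp [Equiv.Perm.mul_apply, hr'app, sub_sub_cancel]
  set f : ((Fin (m+2) → Fin (m+2)) × Equiv.Perm (Fin (m+2)) × Equiv.Perm (Fin (m+2)) ×
      (Fin (m+2) → Fin (m+2) × Fin (m+2) × Fin (m+2))) → ℝ := fun x =>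
    ((Equiv.Perm.sign x.2.1 : ℤ) : ℝ) * ((Equiv.Perm.sign x.2.2.1 : ℤ) : ℝ) *
      ∏ t, Gaux lam mu v w (x.2.2.2 t) (x.1 t) (x.2.1 t) (x.1 (t-1)) (x.2.2.1 t) with hf_def
  set e : ((Fin (m+2) → Fin (m+2)) × Equiv.Perm (Fin (m+2)) × Equiv.Perm (Fin (m+2)) ×
      (Fin (m+2) → Fin (m+2) × Fin (m+2) × Fin (m+2))) →
      ((Fin (m+2) → Fin (m+2)) × Equiv.Perm (Fin (m+2)) × Equiv.Perm (Fin (m+2)) ×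
      (Fin (m+2) → Fin (m+2) × Fin (m+2) × Fin (m+2))) := fun x =>
    (fun t => (x.2.2.2 (-t)).1, x.2.1 * r, x.2.2.1 * r',
      fun t => (x.1 (-t), (x.2.2.2 (-t)).2.1, (x.2.2.2 (1 - t)).2.2)) with he_def
  have he : Function.Involutive e := by
    rintro ⟨k, σ, γ, φ⟩
    simp only [he_def]
    refine Prod.ext ?_ (Prod.ext ?_ (Prod.ext ?_ ?_)) <;> dsimp only
    · funext t; simp
    · rw [mul_assoc, hr2, mul_one]
    · rw [mul_assoc, hr'2, mul_one]
    · funext t; simp [sub_sub_cancel]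
  have hneg : ∀ x, f (e x) = - f x := by
    rintro ⟨k, σ, γ, φ⟩
    have hA : ∏ t : Fin (m+2),
        (lam (φ (-t)).2.1 * (v (φ (-t)).2.1 ((φ (-t)).1) * v (φ (-t)).2.1 (σ (r t)) *
          v (φ (-t)).2.1 (k (-t))))
        = ∏ t : Fin (m+2),
        (lam (φ t).2.1 * (v (φ t).2.1 (k t) * v (φ t).2.1 (σ t) * v (φ t).2.1 ((φ t).1))) := by
      apply Fintype.prod_equiv r
      intro t
      show lam (φ (-t)).2.1 * (v (φ (-t)).2.1 ((φ (-t)).1) * v (φ (-t)).2.1 (σ (r t)) *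
            v (φ (-t)).2.1 (k (-t)))
          = lam (φ (-t)).2.1 * (v (φ (-t)).2.1 (k (-t)) * v (φ (-t)).2.1 (σ (-t)) *
            v (φ (-t)).2.1 ((φ (-t)).1))
      rw [hrapp]
      ring
    have hB : ∏ t : Fin (m+2),
        (mu (φ (1-t)).2.2 * (w (φ (1-t)).2.2 ((φ (-(t-1))).1) * w (φ (1-t)).2.2 (γ (r' t)) *
          w (φ (1-t)).2.2 (k (-t))))
        = ∏ t : Fin (m+2),
        (mu (φ t).2.2 * (w (φ t).2.2 (k (t-1)) * w (φ t).2.2 (γ t) * w (φ t).2.2 ((φ t).1))) := by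
      apply Fintype.prod_equiv r'
      intro t
      show mu (φ (1-t)).2.2 * (w (φ (1-t)).2.2 ((φ (-(t-1))).1) * w (φ (1-t)).2.2 (γ (r' t)) *
            w (φ (1-t)).2.2 (k (-t)))
          = mu (φ (r' t)).2.2 * (w (φ (r' t)).2.2 (k (r' t - 1)) * w (φ (r' t)).2.2 (γ (r' t)) *
            w (φ (r' t)).2.2 ((φ (r' t)).1))
      simp only [hr'app]
      rw [show -(t-1) = 1-t from by rw [neg_sub], show (1 : Fin (m+2)) - t - 1 = -t from by rw [sub_sub_cancel_left]]
      ring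
    have hs : ((Equiv.Perm.sign (σ * r) : ℤ) : ℝ) * ((Equiv.Perm.sign (γ * r') : ℤ) : ℝ)
        = -(((Equiv.Perm.sign σ : ℤ) : ℝ) * ((Equiv.Perm.sign γ : ℤ) : ℝ)) := by
      have h : ((Equiv.Perm.sign (σ * r) : ℤ)) * ((Equiv.Perm.sign (γ * r') : ℤ))
          = -((Equiv.Perm.sign σ : ℤ) * (Equiv.Perm.sign γ : ℤ)) := by
        rw [map_mul, map_mul, Units.val_mul, Units.val_mul]
        calc ((Equiv.Perm.sign σ : ℤ) * (Equiv.Perm.sign r : ℤ)) *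
              ((Equiv.Perm.sign γ : ℤ) * (Equiv.Perm.sign r' : ℤ))
            = ((Equiv.Perm.sign σ : ℤ) * (Equiv.Perm.sign γ : ℤ)) *
              ((Equiv.Perm.sign r : ℤ) * (Equiv.Perm.sign r' : ℤ)) := by ring
          _ = -((Equiv.Perm.sign σ : ℤ) * (Equiv.Perm.sign γ : ℤ)) := by rw [hsignrr']; ring
      exact_mod_cast h
    show ((Equiv.Perm.sign (σ * r) : ℤ) : ℝ) * ((Equiv.Perm.sign (γ * r') : ℤ) : ℝ) *
        ∏ t : Fin (m+2),
          (lam (φ (-t)).2.1 * (v (φ (-t)).2.1 ((φ (-t)).1) * v (φ (-t)).2.1 (σ (r t)) *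
            v (φ (-t)).2.1 (k (-t)))) *
          (mu (φ (1-t)).2.2 * (w (φ (1-t)).2.2 ((φ (-(t-1))).1) * w (φ (1-t)).2.2 (γ (r' t)) *
            w (φ (1-t)).2.2 (k (-t))))
      = -(((Equiv.Perm.sign σ : ℤ) : ℝ) * ((Equiv.Perm.sign γ : ℤ) : ℝ) *
        ∏ t : Fin (m+2),
          (lam (φ t).2.1 * (v (φ t).2.1 (k t) * v (φ t).2.1 (σ t) * v (φ t).2.1 ((φ t).1))) *
          (mu (φ t).2.2 * (w (φ t).2.2 (k (t-1)) * w (φ t).2.2 (γ t) * w (φ t).2.2 ((φ t).1))))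
    rw [Finset.prod_mul_distrib, hA, hB, hs]
    conv_rhs => rw [Finset.prod_mul_distrib]
    ring
  have h1 : ∑ x, f (e x) = ∑ x, f x :=
    Equiv.sum_comp (Function.Involutive.toPerm e he) f
  have h2 : ∑ x, f (e x) = - ∑ x, f x := by
    rw [Finset.sum_congr rfl (fun x _ => hneg x)]
    exact Finset.sum_neg_distrib _
  have h3 : ∑ x, f x = 0 := by linarith
  exact h3

private lemma aux (m : ℕ) (heven : Even (m + 2))
    (lam mu : Fin (m+2) → ℝ) (v w : Fin (m+2) → Fin (m+2) → ℝ)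
    (P : Fin (m+2) → Fin (m+2) → Fin (m+2) → Fin (m+2) → ℝ)
    (hP : ∀ a b c d, P a b c d
      = ∑ p : Fin (m+2) × Fin (m+2) × Fin (m+2), Gaux lam mu v w p a b c d) :
    ∑ k : Fin (m+2) → Fin (m+2), ∑ σ : Equiv.Perm (Fin (m+2)), ∑ γ : Equiv.Perm (Fin (m+2)),
      ((Equiv.Perm.sign σ : ℤ) : ℝ) * ((Equiv.Perm.sign γ : ℤ) : ℝ) *
        ∏ t : Fin (m+2), P (k t) (σ t) (k (t - 1)) (γ t) = 0 := by
  classical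
  have key := sumzero m heven lam mu v w
  simp only [Fintype.sum_prod_type] at key
  simp only [hP]
  have hexp : ∀ (k : Fin (m+2) → Fin (m+2)) (σ γ : Equiv.Perm (Fin (m+2))),
      (∏ t : Fin (m+2), ∑ p : Fin (m+2) × Fin (m+2) × Fin (m+2),
          Gaux lam mu v w p (k t) (σ t) (k (t-1)) (γ t))
      = ∑ φ : Fin (m+2) → Fin (m+2) × Fin (m+2) × Fin (m+2),
          ∏ t, Gaux lam mu v w (φ t) (k t) (σ t) (k (t-1)) (γ t) := by
    intro k σ γ
    rw [Finset.prod_univ_sum, Fintype.piFinset_univ]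
  simp only [hexp, Finset.mul_sum]
  exact key

/-- For even `n ≥ 2`, the polynomial `hₙ` vanishes on every length-2 tensor train whose two
node tensors are symmetric order-3 tensors of symmetric rank at most `n`, i.e. on every
contraction `P a b c d = ∑ s, T a b s * S c d s` with `T = ∑ i, λ i • (v i)^{⊗3}` and
`S = ∑ j, μ j • (w j)^{⊗3}` for arbitrary (not necessarily orthonormal) vectors `v i, w j`.
The product over `t : Fin n` of `P (k t) (σ t) (k (t-1)) (γ t)` uses cyclic `Fin n`
subtraction, encoding the convention `k₀ = kₙ`. -/
theorem hn_vanishes_for_even_n_without_orthogonality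
    (n : ℕ) (hn : 2 ≤ n) (heven : Even n)
    (lam mu : Fin n → ℝ) (v w : Fin n → Fin n → ℝ)
    (T S : Fin n → Fin n → Fin n → ℝ)
    (hT : ∀ a b c, T a b c = ∑ i, lam i * (v i a * v i b * v i c))
    (hS : ∀ a b c, S a b c = ∑ j, mu j * (w j a * w j b * w j c))
    (P : Fin n → Fin n → Fin n → Fin n → ℝ)
    (hP : ∀ a b c d, P a b c d = ∑ s, T a b s * S c d s) :
    ∑ k : Fin n → Fin n, ∑ σ : Equiv.Perm (Fin n), ∑ γ : Equiv.Perm (Fin n),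
      ((Equiv.Perm.sign σ : ℤ) : ℝ) * ((Equiv.Perm.sign γ : ℤ) : ℝ) *
        ∏ t : Fin n, P (k t) (σ t) (k (t - ⟨1, by omega⟩)) (γ t) = 0 := by
  obtain ⟨m, rfl⟩ : ∃ m, n = m + 2 := ⟨n - 2, by omega⟩
  have hone : (⟨1, by omega⟩ : Fin (m+2)) = 1 := by
    ext; simp
  have hP' : ∀ a b c d, P a b c d
      = ∑ p : Fin (m+2) × Fin (m+2) × Fin (m+2), Gaux lam mu v w p a b c d := by
    intro a b c d
    rw [hP]
    simp only [hT, hS, Finset.sum_mul_sum]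
    rw [Fintype.sum_prod_type]
    apply Finset.sum_congr rfl
    intro s _
    rw [Fintype.sum_prod_type]
    simp [Gaux]
  have key := aux m heven lam mu v w P hP'
  simpa only [hone] using key
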